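/- Assume κ = r(E) and let B = {F ⊆ E : |F| = κ and r(F) = κ} be the (nonempty) set of ℓ-spanning acycles of X over K. Let (p_n) and (q_n) be sequences with 0 < p_n < 1, q_n > 0, p_n → 0, and q_n/p_n → 0. Then for every Y ⊆ E, μ_{p_n,q_n}(Y) → (1/|B|)·𝟙[Y ∈ B] as n → ∞; that is, the ℓ-random-cluster measure converges to the uniform measure on ℓ-spanning acycles. -/

import Mathlib

open Finset Filter

/-- As `p → 0` and `q/p → 0`, the `ℓ`-random-cluster measure converges to the
uniform measure on the set `B` of `ℓ`-spanning acycles of `X` over `K`. -/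
theorem stmt_14 {K : Type*} [Field K] {E : Type*} [Fintype E] [DecidableEq E]
    {V : Type*} [AddCommGroup V] [Module K V] [FiniteDimensional K V]
    (bdry : (E → K) →ₗ[K] V)
    (r : Finset E → ℕ)
    (hr : ∀ F : Finset E, r F = Module.finrank K (Submodule.span K
      ((fun σ => bdry (Pi.single σ 1)) '' (F : Set E))))
    (κ : ℕ) (hκ : κ = r Finset.univ)
    (B : Finset (Finset E))
    (hB : B = Finset.univ.filter fun F : Finset E => F.card = κ ∧ r F = κ)
    (hBne : B.Nonempty)
    (w : ℝ → ℝ → Finset E → ℝ)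
    (hw : ∀ (p q : ℝ) (F : Finset E),
      w p q F = p ^ F.card * (1 - p) ^ (Fintype.card E - F.card) * q ^ (κ - r F))
    (Z : ℝ → ℝ → ℝ) (hZ : ∀ p q : ℝ, Z p q = ∑ F : Finset E, w p q F)
    (p q : ℕ → ℝ) (hp : ∀ n, p n ∈ Set.Ioo (0 : ℝ) 1) (hq : ∀ n, 0 < q n)
    (hp0 : Tendsto p atTop (nhds 0))
    (hqp : Tendsto (fun n => q n / p n) atTop (nhds 0)) :
    ∀ Y : Finset E,
      Tendsto (fun n => w (p n) (q n) Y / Z (p n) (q n)) atTop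
        (nhds (if Y ∈ B then (1 : ℝ) / B.card else 0)) := by
  classical
  -- rank is at most the cardinality
  have hrle : ∀ F : Finset E, r F ≤ F.card := by
    intro F
    rw [hr]
    have himg : (fun σ => bdry (Pi.single σ 1)) '' (F : Set E)
        = ↑(F.image fun σ => bdry (Pi.single σ 1)) := by simp
    rw [himg]
    exact le_trans (finrank_span_finset_le_card (F.image fun σ => bdry (Pi.single σ 1))) Finset.card_image_le
  -- rank is monotone, hence at most κ
  have hrκ : ∀ F : Finset E, r F ≤ κ := by
    intro F
    rw [hκ, hr, hr]
    exact Submodule.finrank_mono (Submodule.span_mono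
      (Set.image_mono (f := _) (by simp)))
  set m := Fintype.card E with hm
  set g : ℕ → Finset E → ℝ := fun n F =>
    (p n) ^ (F.card - r F) * (1 - p n) ^ (m - F.card) * (q n / p n) ^ (κ - r F)
    with hg_def
  have hpq : ∀ n (F : Finset E), w (p n) (q n) F = (p n) ^ κ * g n F := by
    intro n F
    have hpn : (0 : ℝ) < p n := (hp n).1
    have e1 : p n ^ κ = p n ^ (r F) * p n ^ (κ - r F) := by
      rw [← pow_add, Nat.add_sub_cancel' (hrκ F)]
    have e2 : p n ^ F.card = p n ^ (r F) * p n ^ (F.card - r F) := by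
      rw [← pow_add, Nat.add_sub_cancel' (hrle F)]
    have e3 : p n ^ (κ - r F) * (q n / p n) ^ (κ - r F) = q n ^ (κ - r F) := by
      rw [← mul_pow, mul_div_cancel₀ _ hpn.ne']
    rw [hw, hg_def]
    calc p n ^ F.card * (1 - p n) ^ (m - F.card) * q n ^ (κ - r F)
        = p n ^ (r F) * p n ^ (F.card - r F) * (1 - p n) ^ (m - F.card)
            * (p n ^ (κ - r F) * (q n / p n) ^ (κ - r F)) := by rw [← e2, e3]
      _ = p n ^ κ * (p n ^ (F.card - r F) * (1 - p n) ^ (m - F.card)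
            * (q n / p n) ^ (κ - r F)) := by rw [e1]; ring
  have hZg : ∀ n, Z (p n) (q n) = (p n) ^ κ * ∑ F : Finset E, g n F := by
    intro n
    rw [hZ, Finset.mul_sum]
    exact Finset.sum_congr rfl fun F _ => hpq n F
  -- pointwise limit of `g`
  have hg : ∀ F : Finset E,
      Tendsto (fun n => g n F) atTop (nhds (if F ∈ B then (1 : ℝ) else 0)) := by
    intro F
    have h1 : Tendsto (fun n => (p n) ^ (F.card - r F)) atTop
        (nhds ((0 : ℝ) ^ (F.card - r F))) := hp0.pow _
    have h2 : Tendsto (fun n => (1 - p n) ^ (m - F.card)) atTop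
        (nhds (((1 : ℝ) - 0) ^ (m - F.card))) := (tendsto_const_nhds.sub hp0).pow _
    have h3 : Tendsto (fun n => (q n / p n) ^ (κ - r F)) atTop
        (nhds ((0 : ℝ) ^ (κ - r F))) := hqp.pow _
    have hmul := (h1.mul h2).mul h3
    have hval : (if F ∈ B then (1 : ℝ) else 0)
        = (0 : ℝ) ^ (F.card - r F) * ((1 : ℝ) - 0) ^ (m - F.card)
            * (0 : ℝ) ^ (κ - r F) := by
      by_cases hF : F ∈ B
      · have hF' := hF
        rw [hB, Finset.mem_filter] at hF'
        obtain ⟨-, hc, hrf⟩ := hF'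
        rw [if_pos hF]
        simp [hc, hrf]
      · have hF' := hF
        rw [hB, Finset.mem_filter] at hF'
        push_neg at hF'
        have hnot := hF' (Finset.mem_univ F)
        rcases lt_or_eq_of_le (hrκ F) with hlt | heq
        · have : 0 < κ - r F := Nat.sub_pos_of_lt hlt
          rw [if_neg hF, zero_pow this.ne']
          ring
        · have hcne : F.card ≠ κ := fun hc => (hnot hc) heq
          have : 0 < F.card - r F := by
            have h1 : κ ≤ F.card := heq ▸ hrle F
            omega
          rw [if_neg hF, zero_pow this.ne']
          ring
    rw [hval]
    exact hmul
  have hsum : Tendsto (fun n => ∑ F : Finset E, g n F) atTop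
      (nhds ((B.card : ℝ))) := by
    have := tendsto_finset_sum (Finset.univ : Finset (Finset E))
      (fun F _ => hg F)
    have hcard : (∑ F : Finset E, if F ∈ B then (1 : ℝ) else 0) = B.card := by
      rw [Finset.sum_boole]
      congr 1
      simp
    rwa [hcard] at this
  have hBpos : (0 : ℝ) < B.card := by
    exact_mod_cast Finset.card_pos.mpr hBne
  intro Y
  have hfin := (hg Y).div hsum hBpos.ne'
  have heq : ∀ n, w (p n) (q n) Y / Z (p n) (q n) = g n Y / ∑ F : Finset E, g n F := by
    intro n
    have hpn : (p n : ℝ) ^ κ ≠ 0 := pow_ne_zero _ (hp n).1.ne'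
    rw [hpq, hZg, mul_div_mul_left _ _ hpn]
  have hvals : (if Y ∈ B then (1 : ℝ) else 0) / (B.card : ℝ)
      = if Y ∈ B then (1 : ℝ) / B.card else 0 := by
    split_ifs <;> simp
  rw [← hvals]
  exact Tendsto.congr (fun n => (heq n).symm) hfin
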